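/- Let f, g : ℝ → ℝ be C^k functions (k < ∞) with a common zero f(x) = g(x) = 0. Then h = f² + g² is a C^k function with h(x) = 0 such that h divides both f^(4k+4) and g^(4k+4) in C^k(ℝ), i.e., f^(4k+4)/h and g^(4k+4)/h extend to C^k functions. -/

import Mathlib

noncomputable def Mo (a b m : ℕ) (p : ℝ × ℝ) : ℝ :=
  p.1 ^ a * p.2 ^ b / (p.1 ^ 2 + p.2 ^ 2) ^ m

lemma sq_norm_le (p : ℝ × ℝ) : ‖p‖ ^ 2 ≤ p.1 ^ 2 + p.2 ^ 2 := by
  have h : ‖p‖ = max ‖p.1‖ ‖p.2‖ := rfl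
  rcases max_cases ‖p.1‖ ‖p.2‖ with ⟨h1, _⟩ | ⟨h1, _⟩ <;> rw [h, h1]
  · rw [Real.norm_eq_abs, sq_abs]; nlinarith [sq_nonneg p.2]
  · rw [Real.norm_eq_abs, sq_abs]; nlinarith [sq_nonneg p.1]

lemma Mo_zero (a b m : ℕ) (hm : 1 ≤ m) : Mo a b m 0 = 0 := by
  simp [Mo, zero_pow (by omega : m ≠ 0)]

lemma Mo_bound (a b m : ℕ) (h : 2 * m < a + b) (p : ℝ × ℝ) :
    |Mo a b m p| ≤ ‖p‖ ^ (a + b - 2 * m) := by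
  by_cases hp : p = 0
  · subst hp
    have hab : a ≠ 0 ∨ b ≠ 0 := by omega
    have : (0:ℝ×ℝ).1 ^ a * (0:ℝ×ℝ).2 ^ b = 0 := by
      rcases hab with h' | h' <;> simp [zero_pow h']
    rw [Mo, this, zero_div, norm_zero, zero_pow (by omega : a + b - 2*m ≠ 0), abs_zero]
  · have hpos : (0:ℝ) < ‖p‖ := norm_pos_iff.mpr hp
    have hs : ‖p‖ ^ 2 ≤ p.1 ^ 2 + p.2 ^ 2 := sq_norm_le p
    have hs0 : (0:ℝ) < (p.1 ^ 2 + p.2 ^ 2) ^ m :=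
      pow_pos (lt_of_lt_of_le (by positivity) hs) m
    have hnum : |p.1 ^ a * p.2 ^ b| ≤ ‖p‖ ^ (a + b) := by
      rw [abs_mul, abs_pow, abs_pow, pow_add]
      have h1 : |p.1| ≤ ‖p‖ := (Real.norm_eq_abs p.1) ▸ norm_fst_le p
      have h2 : |p.2| ≤ ‖p‖ := (Real.norm_eq_abs p.2) ▸ norm_snd_le p
      gcongr <;> first | exact abs_nonneg _ | assumption
    have hden : ‖p‖ ^ (2 * m) ≤ (p.1 ^ 2 + p.2 ^ 2) ^ m := by
      rw [pow_mul]
      exact pow_le_pow_left₀ (by positivity) hs m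
    have : |Mo a b m p| ≤ ‖p‖ ^ (a + b) / ‖p‖ ^ (2 * m) := by
      rw [Mo, abs_div, abs_of_pos hs0]
      exact div_le_div₀ (by positivity) hnum (by positivity) hden
    refine this.trans (le_of_eq ?_)
    rw [div_eq_iff (by positivity), ← pow_add]
    congr 1; omega

noncomputable def Dmo (a b m : ℕ) (p : ℝ × ℝ) : ℝ × ℝ →L[ℝ] ℝ :=
  ((a : ℝ) * Mo (a - 1) b m p - 2 * m * Mo (a + 1) b (m + 1) p) •
      ContinuousLinearMap.fst ℝ ℝ ℝ +
    ((b : ℝ) * Mo a (b - 1) m p - 2 * m * Mo a (b + 1) (m + 1) p) •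
      ContinuousLinearMap.snd ℝ ℝ ℝ

lemma s_ne_zero {p : ℝ × ℝ} (hp : p ≠ 0) : p.1 ^ 2 + p.2 ^ 2 ≠ 0 := by
  have := sq_norm_le p
  have hpos : (0:ℝ) < ‖p‖ := norm_pos_iff.mpr hp
  nlinarith

lemma Mo_hasFDerivAt (a b m : ℕ) (hm : 1 ≤ m) (hab : 2 * m + 2 ≤ a + b) (p : ℝ × ℝ) :
    HasFDerivAt (Mo a b m) (Dmo a b m p) p := by
  by_cases hp : p = 0
  · subst hp
    have hD : Dmo a b m 0 = 0 := by
      simp [Dmo, Mo_zero _ _ _ hm, Mo_zero _ _ _ (by omega : 1 ≤ m + 1)]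
    rw [hD]
    rw [hasFDerivAt_iff_isLittleO_nhds_zero]
    simp only [Mo_zero _ _ _ hm, ContinuousLinearMap.zero_apply, add_zero, sub_zero, zero_add]
    rw [Asymptotics.isLittleO_iff]
    intro c hc
    filter_upwards [Metric.ball_mem_nhds (0:ℝ×ℝ) (lt_min one_pos hc)] with q hq
    rw [Metric.mem_ball, dist_zero_right] at hq
    have hq1 : ‖q‖ ≤ 1 := le_of_lt (lt_of_lt_of_le hq (min_le_left _ _))
    have hqc : ‖q‖ ≤ c := le_of_lt (lt_of_lt_of_le hq (min_le_right _ _))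
    have h1 : ‖Mo a b m q‖ ≤ ‖q‖ ^ (a + b - 2 * m) :=
      (Real.norm_eq_abs _) ▸ Mo_bound a b m (by omega) q
    have h2 : ‖q‖ ^ (a + b - 2 * m) ≤ ‖q‖ ^ 2 :=
      pow_le_pow_of_le_one (norm_nonneg _) hq1 (by omega)
    calc ‖Mo a b m q‖ ≤ ‖q‖ ^ 2 := h1.trans h2
      _ = ‖q‖ * ‖q‖ := sq ‖q‖
      _ ≤ c * ‖q‖ := by gcongr
  · have hne : p.1 ^ 2 + p.2 ^ 2 ≠ 0 := s_ne_zero hp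
    have h1 : HasFDerivAt (fun q : ℝ × ℝ => q.1 ^ a)
        (((a : ℝ) * p.1 ^ (a - 1)) • ContinuousLinearMap.fst ℝ ℝ ℝ) p :=
      (hasDerivAt_pow a p.1).comp_hasFDerivAt p hasFDerivAt_fst
    have h2 : HasFDerivAt (fun q : ℝ × ℝ => q.2 ^ b)
        (((b : ℝ) * p.2 ^ (b - 1)) • ContinuousLinearMap.snd ℝ ℝ ℝ) p :=
      (hasDerivAt_pow b p.2).comp_hasFDerivAt p hasFDerivAt_snd
    have hnum := h1.mul h2
    have hs1 : HasFDerivAt (fun q : ℝ × ℝ => q.1 ^ 2 + q.2 ^ 2)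
        (((2 : ℝ) * p.1 ^ 1) • ContinuousLinearMap.fst ℝ ℝ ℝ +
          ((2 : ℝ) * p.2 ^ 1) • ContinuousLinearMap.snd ℝ ℝ ℝ) p := by
      exact ((hasDerivAt_pow 2 p.1).comp_hasFDerivAt p hasFDerivAt_fst).add
        ((hasDerivAt_pow 2 p.2).comp_hasFDerivAt p hasFDerivAt_snd) |>.congr_fderiv (by norm_num)
    have hinvd : HasDerivAt (fun t : ℝ => (t ^ m)⁻¹)
        (-((m : ℝ) * (p.1 ^ 2 + p.2 ^ 2) ^ (m - 1)) / ((p.1 ^ 2 + p.2 ^ 2) ^ m) ^ 2)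
        (p.1 ^ 2 + p.2 ^ 2) :=
      (hasDerivAt_pow m _).inv (pow_ne_zero m hne)
    have hinv := hinvd.comp_hasFDerivAt p hs1
    have hM := hnum.mul hinv
    have hMo : (fun q : ℝ × ℝ => (q.1 ^ a * q.2 ^ b) * ((fun t : ℝ => (t ^ m)⁻¹) ∘
        fun q : ℝ × ℝ => q.1 ^ 2 + q.2 ^ 2) q) = Mo a b m := by
      funext q; simp [Mo, div_eq_mul_inv, Function.comp]
    rw [← hMo]
    refine hM.congr_fderiv ?_
    obtain ⟨m', rfl⟩ : ∃ m', m = m' + 1 := ⟨m - 1, by omega⟩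
    refine ContinuousLinearMap.ext fun v => ?_
    simp only [Dmo, Mo, ContinuousLinearMap.add_apply, ContinuousLinearMap.smul_apply,
      ContinuousLinearMap.coe_fst', ContinuousLinearMap.coe_snd', smul_eq_mul,
      Function.comp, Pi.mul_apply, Nat.add_sub_cancel]
    push_cast
    field_simp
    ring

lemma Mo_contDiff (n : ℕ) : ∀ a b m : ℕ, 1 ≤ m → 2 * m + n + 1 ≤ a + b →
    ContDiff ℝ (n : ℕ∞) (Mo a b m) := by
  induction n with
  | zero =>
    intro a b m hm hab
    suffices h : Continuous (Mo a b m) by exact_mod_cast contDiff_zero.mpr h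
    rw [continuous_iff_continuousAt]
    intro p
    by_cases hp : p = 0
    · subst hp
      have h0 : Mo a b m 0 = 0 := Mo_zero a b m hm
      rw [ContinuousAt, h0]
      apply squeeze_zero_norm (fun q => (Real.norm_eq_abs _) ▸ Mo_bound a b m (by omega) q)
      have : Filter.Tendsto (fun q : ℝ × ℝ => ‖q‖ ^ (a + b - 2 * m)) (nhds 0)
          (nhds (‖(0:ℝ×ℝ)‖ ^ (a + b - 2 * m))) :=
        ((continuous_pow _).comp continuous_norm).continuousAt
      simpa [zero_pow (by omega : a + b - 2 * m ≠ 0)] using this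
    · exact ContinuousAt.div (by fun_prop) (by fun_prop) (pow_ne_zero _ (s_ne_zero hp))
  | succ n ih =>
    intro a b m hm hab
    suffices h : ContDiff ℝ ((n : WithTop ℕ∞) + 1) (Mo a b m) by exact_mod_cast h
    rw [contDiff_succ_iff_fderiv]
    refine ⟨fun p => (Mo_hasFDerivAt a b m hm (by omega) p).differentiableAt, by simp, ?_⟩
    have key : fderiv ℝ (Mo a b m) = Dmo a b m :=
      funext fun p => (Mo_hasFDerivAt a b m hm (by omega) p).fderiv
    rw [key]
    suffices h : ContDiff ℝ ((n:ℕ) : ℕ∞) (Dmo a b m) by exact_mod_cast h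
    have c1 := ih (a - 1) b m hm (by omega)
    have c2 := ih (a + 1) b (m + 1) (by omega) (by omega)
    have c3 := ih a (b - 1) m hm (by omega)
    have c4 := ih a (b + 1) (m + 1) (by omega) (by omega)
    exact (((contDiff_const.mul c1).sub (contDiff_const.mul c2)).smul contDiff_const).add
      (((contDiff_const.mul c3).sub (contDiff_const.mul c4)).smul contDiff_const)


theorem stmt_2 (k : ℕ) (f g : ℝ → ℝ) (hf : ContDiff ℝ (k : ℕ∞) f)
    (hg : ContDiff ℝ (k : ℕ∞) g) (x : ℝ) (hfx : f x = 0) (hgx : g x = 0) :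
    ContDiff ℝ (k : ℕ∞) (fun y => f y ^ 2 + g y ^ 2) ∧
    (fun y => f y ^ 2 + g y ^ 2) x = 0 ∧
    (∃ q : ℝ → ℝ, ContDiff ℝ (k : ℕ∞) q ∧
      ∀ y : ℝ, (f y) ^ (4 * k + 4) = q y * (f y ^ 2 + g y ^ 2)) ∧
    (∃ q : ℝ → ℝ, ContDiff ℝ (k : ℕ∞) q ∧
      ∀ y : ℝ, (g y) ^ (4 * k + 4) = q y * (f y ^ 2 + g y ^ 2)) := by
  have hMo : ContDiff ℝ (k : ℕ∞) (Mo (4 * k + 4) 0 1) :=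
    Mo_contDiff k (4 * k + 4) 0 1 le_rfl (by omega)
  refine ⟨(hf.pow 2).add (hg.pow 2), by simp [hfx, hgx], ?_, ?_⟩
  · refine ⟨fun y => Mo (4 * k + 4) 0 1 (f y, g y), hMo.comp (hf.prodMk hg), fun y => ?_⟩
    by_cases hs : f y ^ 2 + g y ^ 2 = 0
    · have hfy : f y = 0 := by nlinarith [sq_nonneg (f y), sq_nonneg (g y)]
      have hgy : g y = 0 := by nlinarith [sq_nonneg (f y), sq_nonneg (g y)]
      simp [hfy, hgy, zero_pow (by omega : 4 * k + 4 ≠ 0)]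
    · simp only [Mo, pow_zero, mul_one, pow_one]
      rw [div_mul_cancel₀ _ hs]
  · refine ⟨fun y => Mo (4 * k + 4) 0 1 (g y, f y), hMo.comp (hg.prodMk hf), fun y => ?_⟩
    by_cases hs : f y ^ 2 + g y ^ 2 = 0
    · have hfy : f y = 0 := by nlinarith [sq_nonneg (f y), sq_nonneg (g y)]
      have hgy : g y = 0 := by nlinarith [sq_nonneg (f y), sq_nonneg (g y)]
      simp [hfy, hgy, zero_pow (by omega : 4 * k + 4 ≠ 0)]
    · simp only [Mo, pow_zero, mul_one, pow_one]
      rw [add_comm (g y ^ 2), div_mul_cancel₀ _ hs]
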